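/- arXiv:2009.11791 — 6 statements merged into one kernel-verified Lean document; each statement's English description precedes it below -/
import Mathlib

section
/- Let A be a commutative ring equipped with a ℤ-grading A = ⊕_{n∈ℤ} A_n, and let (J_d)_{d∈D} be a family of homogeneous ideals of A indexed by a set D. Suppose that for every integer N there exists an index d ∈ D such that every nonzero homogeneous element of J_d has degree greater than N (i.e. the minimal degrees n_d of the ideals J_d are unbounded above). Then the intersection ⋂_{d∈D} J_d is the zero ideal. -/
/-- Lemma 2.4 of the paper: if `A` is a ℤ-graded commutative ring and `(J d)` is a family of
homogeneous ideals whose minimal degrees are unbounded above (for every `N` there is `d` such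
that every nonzero homogeneous element of `J d` has degree greater than `N`), then the
intersection of the `J d` is zero. -/
theorem graded_inf_eq_bot_of_degrees_unbounded
    {A : Type*} [CommRing A] (𝒜 : ℤ → Submodule ℤ A) [GradedRing 𝒜]
    {D : Type*} (J : D → Ideal A)
    (hhom : ∀ d : D, Ideal.IsHomogeneous 𝒜 (J d))
    (hdeg : ∀ N : ℤ, ∃ d : D, ∀ (n : ℤ) (a : A), a ∈ J d → a ∈ 𝒜 n → a ≠ 0 → N < n) :
    (⨅ d : D, J d) = ⊥ := by
  refine eq_bot_iff.2 fun a ha => ?_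
  simp only [Ideal.mem_iInf] at ha
  have hcomp : ∀ n : ℤ, (DirectSum.decompose 𝒜 a n : A) = 0 := by
    intro n
    obtain ⟨d, hd⟩ := hdeg n
    by_contra h
    exact lt_irrefl n (hd n _ (hhom d n (ha d)) (SetLike.coe_mem _) h)
  classical
  have h0 : a = 0 := by
    conv_lhs => rw [← DirectSum.sum_support_decompose 𝒜 a]
    exact Finset.sum_eq_zero fun n _ => hcomp n
  simp [h0]
end

section
/- Let A be a (possibly noncommutative) ring and let s ∈ A be an element which is not nilpotent and such that ad_s is locally nilpotent, i.e. for every a ∈ A there exists n with ad_s^n(a) = 0, where ad_s(a) = sa − as. Then the multiplicative set S = {s^k : k ≥ 0} (which does not contain 0) is both a right and a left denominator set; explicitly: (1) for every a ∈ A and k ≥ 0 there exist b ∈ A and m ≥ 0 with a·s^m = s^k·b (right Ore condition); (2) for every a ∈ A and k ≥ 0, if s^k·a = 0 then a·s^m = 0 for some m ≥ 0 (right regularity); (3) for every a ∈ A and k ≥ 0 there exist b ∈ A and m ≥ 0 with s^m·a = b·s^k (left Ore condition); (4) for every a ∈ A and k ≥ 0, if a·s^k = 0 then s^m·a = 0 for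 some m ≥ 0 (left regularity). In particular the right and left rings of fractions A S^{-1} ≅ S^{-1} A exist. -/
/-- Corollary 6.3 ('GabberSimple') of the paper: if `s` is a non-nilpotent element of a ring `A`
whose adjoint action `ad s` is locally nilpotent, then the multiplicative set
`S = {s^k : k ≥ 0}` does not contain `0` and is both a right and a left denominator set:
it satisfies the right and left Ore conditions together with the corresponding regularity
conditions, so the rings of fractions `A S⁻¹ ≅ S⁻¹ A` exist. -/
theorem powers_denominator_set_of_locally_nilpotent_ad
    {A : Type*} [Ring A] (s : A)
    (hnn : ¬ IsNilpotent s)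
    (hln : ∀ a : A, ∃ n : ℕ, (fun a => s * a - a * s)^[n] a = 0) :
    (∀ k : ℕ, s ^ k ≠ 0) ∧
    (∀ (a : A) (k : ℕ), ∃ (b : A) (m : ℕ), a * s ^ m = s ^ k * b) ∧
    (∀ (a : A) (k : ℕ), s ^ k * a = 0 → ∃ m : ℕ, a * s ^ m = 0) ∧
    (∀ (a : A) (k : ℕ), ∃ (b : A) (m : ℕ), s ^ m * a = b * s ^ k) ∧
    (∀ (a : A) (k : ℕ), a * s ^ k = 0 → ∃ m : ℕ, s ^ m * a = 0) := by
  set δ : A → A := fun a => s * a - a * s with hδ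
  have hδa : ∀ a : A, δ a = s * a - a * s := fun a => rfl
  -- pull one `s` out on the left
  have keyR : ∀ (n : ℕ) (a : A), δ^[n] a = 0 → ∃ b : A, a * s ^ n = s * b := by
    intro n
    induction n with
    | zero =>
      intro a ha
      simp only [Function.iterate_zero, id_eq] at ha
      exact ⟨0, by simp [ha]⟩
    | succ n ih =>
      intro a ha
      rw [Function.iterate_succ_apply] at ha
      obtain ⟨b, hb⟩ := ih (δ a) ha
      refine ⟨a * s ^ n - b, ?_⟩
      have h1 : a * s ^ (n + 1) = (s * a - δ a) * s ^ n := by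
        rw [hδa]; rw [pow_succ']
        noncomm_ring
      rw [h1, sub_mul, hb, mul_sub, mul_assoc]
  -- pull one `s` out on the right
  have keyL : ∀ (n : ℕ) (a : A), δ^[n] a = 0 → ∃ b : A, s ^ n * a = b * s := by
    intro n
    induction n with
    | zero =>
      intro a ha
      simp only [Function.iterate_zero, id_eq] at ha
      exact ⟨0, by simp [ha]⟩
    | succ n ih =>
      intro a ha
      rw [Function.iterate_succ_apply] at ha
      obtain ⟨b, hb⟩ := ih (δ a) ha
      refine ⟨s ^ n * a + b, ?_⟩
      have h1 : s ^ (n + 1) * a = s ^ n * (a * s + δ a) := by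
        rw [hδa]; rw [pow_succ]
        noncomm_ring
      rw [h1, mul_add, hb, add_mul, mul_assoc]
  have pullR : ∀ a : A, ∃ (c : A) (m : ℕ), a * s ^ m = s * c := by
    intro a
    obtain ⟨n, hn⟩ := hln a
    obtain ⟨b, hb⟩ := keyR n a hn
    exact ⟨b, n, hb⟩
  have pullL : ∀ a : A, ∃ (c : A) (m : ℕ), s ^ m * a = c * s := by
    intro a
    obtain ⟨n, hn⟩ := hln a
    obtain ⟨b, hb⟩ := keyL n a hn
    exact ⟨b, n, hb⟩
  -- zero lemmas
  have zR : ∀ (n : ℕ) (a : A), δ^[n] a = 0 → s * a = 0 → a * s ^ n = 0 := by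
    intro n
    induction n with
    | zero =>
      intro a ha _
      simp only [Function.iterate_zero, id_eq] at ha
      simp [ha]
    | succ n ih =>
      intro a ha hsa
      rw [Function.iterate_succ_apply] at ha
      have hδz : s * δ a = 0 := by
        have e : s * δ a = δ (s * a) := by rw [hδa, hδa]; noncomm_ring
        rw [e, hsa, hδa]; simp
      have h2 := ih (δ a) ha hδz
      have h1 : a * s ^ (n + 1) = (s * a - δ a) * s ^ n := by
        rw [hδa]; rw [pow_succ']
        noncomm_ring
      rw [h1, hsa, zero_sub, neg_mul, h2, neg_zero]
  have zL : ∀ (n : ℕ) (a : A), δ^[n] a = 0 → a * s = 0 → s ^ n * a = 0 := by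
    intro n
    induction n with
    | zero =>
      intro a ha _
      simp only [Function.iterate_zero, id_eq] at ha
      simp [ha]
    | succ n ih =>
      intro a ha has
      rw [Function.iterate_succ_apply] at ha
      have hδz : δ a * s = 0 := by
        have e : δ a * s = δ (a * s) := by rw [hδa, hδa]; noncomm_ring
        rw [e, has, hδa]; simp
      have h2 := ih (δ a) ha hδz
      have h1 : s ^ (n + 1) * a = s ^ n * (a * s + δ a) := by
        rw [hδa]; rw [pow_succ]
        noncomm_ring
      rw [h1, has, zero_add, h2]
  refine ⟨?_, ?_, ?_, ?_, ?_⟩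
  · intro k hk
    exact hnn ⟨k, hk⟩
  · -- right Ore
    intro a k
    induction k with
    | zero => exact ⟨a, 0, by simp⟩
    | succ k ih =>
      obtain ⟨b, m, hb⟩ := ih
      obtain ⟨c, m', hc⟩ := pullR b
      refine ⟨c, m + m', ?_⟩
      rw [pow_add, ← mul_assoc, hb, mul_assoc, hc, pow_succ, mul_assoc]
  · -- right regularity
    intro a k
    induction k generalizing a with
    | zero =>
      intro h
      rw [pow_zero, one_mul] at h
      exact ⟨0, by simp [h]⟩
    | succ k ih =>
      intro h
      have h' : s * (s ^ k * a) = 0 := by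
        rw [← mul_assoc, ← pow_succ', h]
      obtain ⟨n, hn⟩ := hln (s ^ k * a)
      have h2 : s ^ k * (a * s ^ n) = 0 := by
        have := zR n (s ^ k * a) hn h'
        rw [mul_assoc] at this
        exact this
      obtain ⟨m, hm⟩ := ih (a * s ^ n) h2
      exact ⟨n + m, by rw [pow_add, ← mul_assoc, hm]⟩
  · -- left Ore
    intro a k
    induction k with
    | zero => exact ⟨a, 0, by simp⟩
    | succ k ih =>
      obtain ⟨b, m, hb⟩ := ih
      obtain ⟨c, m', hc⟩ := pullL b
      refine ⟨c, m' + m, ?_⟩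
      rw [pow_add, mul_assoc, hb, ← mul_assoc, hc, mul_assoc, ← pow_succ']
  · -- left regularity
    intro a k
    induction k generalizing a with
    | zero =>
      intro h
      rw [pow_zero, mul_one] at h
      exact ⟨0, by simp [h]⟩
    | succ k ih =>
      intro h
      have h' : (a * s ^ k) * s = 0 := by
        rw [mul_assoc, ← pow_succ, h]
      obtain ⟨n, hn⟩ := hln (a * s ^ k)
      have h2 : (s ^ n * a) * s ^ k = 0 := by
        have := zL n (a * s ^ k) hn h'
        rw [← mul_assoc] at this
        exact this
      obtain ⟨m, hm⟩ := ih (s ^ n * a) h2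
      exact ⟨m + n, by rw [pow_add, mul_assoc, hm]⟩
end

section
/- Let ℂ((X)) be the field of formal Laurent series over ℂ and write t := X^{-1}, identifying ℂ((X)) with ℂ((t^{-1})) and ℂ[[X]] with ℂ[[t^{-1}]]. Let p ∈ ℂ((X)) lie in Xℂ[[X]] (i.e. the coefficient of X^n in p vanishes for all n ≤ 0), write p₁ and p₂ for the coefficients of X and X² in p, and assume p₁ ≠ 0. Set q := p₁·t − p₂ − p₁²·p^{-1} ∈ ℂ((X)). Then: (a) q ∈ Xℂ[[X]], i.e. the coefficient of X^n in q vanishes for all n ≤ 0; (b) p₁·p^{-1} − t ∈ ℂ[[X]], i.e. the coefficient of X^n in p₁·p^{-1} vanishes for all n < −1 and its coefficient of X^{-1} equals 1; and (c) the following identity of 2×2 matrices over ℂ((X)) holds: [[t − p₁^{-1}p₂, −p₁],[p₁^{-1}, 0]] · [[1, p],[0, 1]] = [[1, q],[0, 1]] · [[p₁·p^{-1}, 0],[p₁^{-1}, p₁^{-1}·p]]. -/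
set_option linter.unnecessarySimpa false


/-- The Laurent series variable `X` in `ℂ((X)) ≅ ℂ((t⁻¹))`. -/
noncomputable def Xls : LaurentSeries ℂ := HahnSeries.single (1 : ℤ) (1 : ℂ)

/-- The element `t = X⁻¹` of `ℂ((X))`, modelling the variable `t` of `ℂ((t⁻¹))`. -/
noncomputable def tls : LaurentSeries ℂ := Xls⁻¹

/-- The inclusion of constants `ℂ → ℂ((X))`. -/
noncomputable def Cls : ℂ →+* LaurentSeries ℂ := algebraMap ℂ (LaurentSeries ℂ)

lemma Cls_apply' (c : ℂ) : Cls c = HahnSeries.single (0:ℤ) c := by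
  rw [Cls, HahnSeries.algebraMap_apply', PowerSeries.algebraMap_apply]
  simp [HahnSeries.ofPowerSeries_C, HahnSeries.C_apply]

lemma Cls_mul_coeff (c : ℂ) (x : LaurentSeries ℂ) (n : ℤ) :
    (Cls c * x).coeff n = c * x.coeff n := by
  rw [Cls_apply']
  simpa using HahnSeries.single_mul_coeff_add (r := c) (x := x) (a := n) (b := 0)

lemma tls_eq : tls = HahnSeries.single (-1:ℤ) (1:ℂ) := by
  rw [tls, Xls]
  exact inv_eq_of_mul_eq_one_right (by rw [HahnSeries.single_mul_single]; norm_num)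

/-- The computations from the proof of Lemma 5.6 ('le:impsi') of the paper: for
`p ∈ Xℂ[[X]]` with `p₁ = coeff X p ≠ 0` and `q := p₁ t − p₂ − p₁² p⁻¹`, we have
(a) `q ∈ Xℂ[[X]]`; (b) `p₁ p⁻¹ − t ∈ ℂ[[X]]`; and (c) the stated Gauss-type
2×2 matrix identity over `ℂ((X))`. -/
theorem impsi_computations (p : LaurentSeries ℂ)
    (hp : ∀ n : ℤ, n ≤ 0 → p.coeff n = 0)
    (hp1 : p.coeff 1 ≠ 0) :
    (∀ n : ℤ, n ≤ 0 →
      (Cls (p.coeff 1) * tls - Cls (p.coeff 2) - (Cls (p.coeff 1)) ^ 2 * p⁻¹).coeff n = 0) ∧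
    ((∀ n : ℤ, n < -1 → (Cls (p.coeff 1) * p⁻¹).coeff n = 0) ∧
      (Cls (p.coeff 1) * p⁻¹).coeff (-1) = 1) ∧
    (!![tls - Cls ((p.coeff 1)⁻¹ * p.coeff 2), -Cls (p.coeff 1);
        Cls ((p.coeff 1)⁻¹), 0] * !![1, p; 0, 1]
      = !![1, Cls (p.coeff 1) * tls - Cls (p.coeff 2) - (Cls (p.coeff 1)) ^ 2 * p⁻¹; 0, 1] *
        !![Cls (p.coeff 1) * p⁻¹, 0;
           Cls ((p.coeff 1)⁻¹), Cls ((p.coeff 1)⁻¹) * p]) := by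
  have hp0 : p ≠ 0 := fun h => hp1 (by simp [h])
  set u : PowerSeries ℂ := PowerSeries.mk (fun n => p.coeff ((n : ℤ) + 1)) with hu
  have hu0 : PowerSeries.constantCoeff u = p.coeff 1 := by
    rw [← PowerSeries.coeff_zero_eq_constantCoeff]
    simp [hu]
  have hu1 : PowerSeries.coeff 1 u = p.coeff 2 := by
    simp [hu]
  have hpu : p = HahnSeries.single (1:ℤ) 1 * (u : LaurentSeries ℂ) := by
    ext n
    have h1 : ((HahnSeries.single (1:ℤ) (1:ℂ)) * (u : LaurentSeries ℂ)).coeff n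
        = (u : LaurentSeries ℂ).coeff (n - 1) := by
      simpa using HahnSeries.coeff_single_mul_add (r := (1:ℂ))
        (x := (u : LaurentSeries ℂ)) (a := n - 1) (b := 1)
    rw [h1, PowerSeries.coeff_coe]
    by_cases hn : n ≤ 0
    · rw [if_pos (by omega), hp n hn]
    · rw [if_neg (by omega)]
      simp only [hu, PowerSeries.coeff_mk]
      congr 1
      omega
  set v : PowerSeries ℂ := u⁻¹ with hv
  have huv : u * v = 1 := PowerSeries.mul_inv_cancel u (by rw [hu0]; exact hp1)
  have hv0 : PowerSeries.constantCoeff v = (p.coeff 1)⁻¹ := by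
    rw [hv, PowerSeries.constantCoeff_inv, hu0]
  have hv1 : PowerSeries.coeff 1 v = -(p.coeff 2) * (p.coeff 1)⁻¹ ^ 2 := by
    have h := congrArg (PowerSeries.coeff 1) huv
    rw [PowerSeries.coeff_mul, show Finset.HasAntidiagonal.antidiagonal (1:ℕ) = {(0,1),(1,0)} from rfl,
      Finset.sum_pair (by decide)] at h
    simp only [PowerSeries.coeff_zero_eq_constantCoeff, PowerSeries.coeff_one,
      if_neg one_ne_zero, hu0, hu1, hv0] at h
    field_simp at h
    field_simp
    linear_combination h
  have hpv : p⁻¹ = HahnSeries.single (-1:ℤ) 1 * (v : LaurentSeries ℂ) := by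
    rw [eq_comm]
    apply eq_inv_of_mul_eq_one_right
    rw [hpu]
    have hassoc : ((HahnSeries.single (1:ℤ) (1:ℂ)) * (u : LaurentSeries ℂ))
        * ((HahnSeries.single (-1:ℤ) (1:ℂ)) * (v : LaurentSeries ℂ))
        = (HahnSeries.single (1:ℤ) (1:ℂ) * HahnSeries.single (-1:ℤ) (1:ℂ))
          * ((u : LaurentSeries ℂ) * (v : LaurentSeries ℂ)) := by ring
    rw [hassoc, HahnSeries.single_mul_single, ← PowerSeries.coe_mul, huv]
    norm_num
  have hic : ∀ n : ℤ, p⁻¹.coeff n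
      = if n + 1 < 0 then 0 else PowerSeries.coeff (n+1).natAbs v := by
    intro n
    rw [hpv]
    have h1 : ((HahnSeries.single (-1:ℤ) (1:ℂ)) * (v : LaurentSeries ℂ)).coeff n
        = (v : LaurentSeries ℂ).coeff (n + 1) := by
      simpa using HahnSeries.coeff_single_mul_add (r := (1:ℂ))
        (x := (v : LaurentSeries ℂ)) (a := n + 1) (b := -1)
    rw [h1, PowerSeries.coeff_coe]
  have hiA : ∀ n : ℤ, n < -1 → p⁻¹.coeff n = 0 := by
    intro n hn; rw [hic n, if_pos (by omega)]
  have hiB : p⁻¹.coeff (-1) = (p.coeff 1)⁻¹ := by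
    rw [hic, if_neg (by omega), show ((-1:ℤ)+1).natAbs = 0 by norm_num,
      PowerSeries.coeff_zero_eq_constantCoeff, hv0]
  have hiC : p⁻¹.coeff 0 = -(p.coeff 2) * (p.coeff 1)⁻¹ ^ 2 := by
    rw [hic, if_neg (by omega), show ((0:ℤ)+1).natAbs = 1 by norm_num, hv1]
  refine ⟨?_, ⟨?_, ?_⟩, ?_⟩
  · intro n hn
    rw [HahnSeries.coeff_sub, HahnSeries.coeff_sub, Cls_mul_coeff, ← map_pow, Cls_mul_coeff,
      Cls_apply', tls_eq, HahnSeries.coeff_single, HahnSeries.coeff_single]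
    by_cases h0 : n = 0
    · subst h0
      rw [hiC]
      norm_num
      field_simp
      ring
    · by_cases h1 : n = -1
      · subst h1
        rw [hiB]
        norm_num
        field_simp
        ring
      · rw [hiA n (by omega), if_neg h1, if_neg h0]
        ring
  · intro n hn
    rw [Cls_mul_coeff, hiA n hn, mul_zero]
  · rw [Cls_mul_coeff, hiB]
    field_simp
  · have hC1 : Cls ((p.coeff 1)⁻¹) = (Cls (p.coeff 1))⁻¹ := map_inv₀ Cls _
    have hCne : Cls (p.coeff 1) ≠ 0 := by
      rw [Cls_apply']
      simpa [HahnSeries.single_eq_zero_iff] using hp1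
    ext i j : 1
    fin_cases i <;> fin_cases j <;>
      simp only [Matrix.mul_apply, Fin.sum_univ_succ, Fin.sum_univ_zero, Matrix.cons_val',
        Matrix.cons_val_zero, Matrix.cons_val_one, Matrix.head_cons, Matrix.head_fin_const,
        Matrix.empty_val', Matrix.cons_val_fin_one, map_mul, hC1,
        Fin.zero_eta, Fin.mk_one, Fin.succ_zero_eq_one, Matrix.of_apply, Matrix.cons_val_succ] <;>
      field_simp [hp0, hCne] <;>
      ring
end

section
/- With notation as in the context, set S_i := H_i^{(m_i+2)} − (1/2)(H_i^{(m_i+1)})² in Y_μ. Then for all i, j ∈ I and all r ≥ 1: [S_i, E_j^{(r)}] = (α_i·α_j)·E_j^{(r+1)} and [S_i, F_j^{(r)}] = −(α_i·α_j)·F_j^{(r+1)}, where α_i·α_j = d_i a_{ij}. -/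
/-! The shifted Yangian `Y_μ`, presented by generators and relations as in the paper:
generators `E_i^{(q)}, F_i^{(q)}` for `i ∈ I`, `q ≥ 1` and `H_i^{(p)}` for `p ∈ ℤ`,
with the relations of Definitions 3.1 and 3.2 of the paper, where `m i = −⟨μ, α_i⟩`. -/

open scoped Classical
namespace ShiftedYangian

/-- Generators of the shifted Yangian: `E i q` and `F i q` for `q ≥ 1`, `H i p` for `p : ℤ`. -/
inductive YGen (I : Type) : Type
  | E : I → ℕ+ → YGen I
  | F : I → ℕ+ → YGen I
  | H : I → ℤ → YGen I

/-- The commutator `[x, y] = x y − y x`. -/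
def brkt {A : Type*} [Ring A] (x y : A) : A := x * y - y * x

/-- The iterated bracket `nestBrkt y [x₁, …, x_N] = [x₁, [x₂, ⋯ [x_N, y] ⋯]]`. -/
def nestBrkt {A : Type*} [Ring A] (y : A) : List A → A
  | [] => y
  | x :: xs => brkt x (nestBrkt y xs)

variable (I : Type) (a : I → I → ℤ) (d : I → ℤ) (m : I → ℤ)

/-- The generator `E_i^{(q)}` of the free algebra. -/
noncomputable def eg (i : I) (q : ℕ+) : FreeAlgebra ℂ (YGen I) := FreeAlgebra.ι ℂ (YGen.E i q)

/-- The generator `F_i^{(q)}` of the free algebra. -/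
noncomputable def fg (i : I) (q : ℕ+) : FreeAlgebra ℂ (YGen I) := FreeAlgebra.ι ℂ (YGen.F i q)

/-- The generator `H_i^{(p)}` of the free algebra. -/
noncomputable def hg (i : I) (p : ℤ) : FreeAlgebra ℂ (YGen I) := FreeAlgebra.ι ℂ (YGen.H i p)

/-- The defining relations of the shifted Yangian `Y_μ`, with `α_i·α_j = d_i a_{ij}` and
`m i = −⟨μ, α_i⟩`. -/
inductive Rel : FreeAlgebra ℂ (YGen I) → FreeAlgebra ℂ (YGen I) → Prop
  | HH : ∀ (i j : I) (p q : ℤ), Rel (brkt (hg I i p) (hg I j q)) 0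
  | EF : ∀ (i j : I) (p q : ℕ+),
      Rel (brkt (eg I i p) (fg I j q))
          (if i = j then hg I i ((p : ℤ) + (q : ℤ) - 1) else 0)
  | HE : ∀ (i j : I) (p : ℤ) (q : ℕ+),
      Rel (brkt (hg I i (p + 1)) (eg I j q) - brkt (hg I i p) (eg I j (q + 1)))
          ((((d i * a i j : ℤ) : ℂ) / 2) • (hg I i p * eg I j q + eg I j q * hg I i p))
  | HF : ∀ (i j : I) (p : ℤ) (q : ℕ+),
      Rel (brkt (hg I i (p + 1)) (fg I j q) - brkt (hg I i p) (fg I j (q + 1)))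
          (-((((d i * a i j : ℤ) : ℂ) / 2) • (hg I i p * fg I j q + fg I j q * hg I i p)))
  | EE : ∀ (i j : I) (p q : ℕ+),
      Rel (brkt (eg I i (p + 1)) (eg I j q) - brkt (eg I i p) (eg I j (q + 1)))
          ((((d i * a i j : ℤ) : ℂ) / 2) • (eg I i p * eg I j q + eg I j q * eg I i p))
  | FF : ∀ (i j : I) (p q : ℕ+),
      Rel (brkt (fg I i (p + 1)) (fg I j q) - brkt (fg I i p) (fg I j (q + 1)))
          (-((((d i * a i j : ℤ) : ℂ) / 2) • (fg I i p * fg I j q + fg I j p * fg I i q)))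
  | serreE : ∀ (i j : I), i ≠ j → ∀ (q : ℕ+) (p : Fin (1 - a i j).toNat → ℕ+),
      Rel (∑ σ : Equiv.Perm (Fin (1 - a i j).toNat),
            nestBrkt (eg I j q) (List.ofFn fun k => eg I i (p (σ k)))) 0
  | serreF : ∀ (i j : I), i ≠ j → ∀ (q : ℕ+) (p : Fin (1 - a i j).toNat → ℕ+),
      Rel (∑ σ : Equiv.Perm (Fin (1 - a i j).toNat),
            nestBrkt (fg I j q) (List.ofFn fun k => fg I i (p (σ k)))) 0
  | Hlow : ∀ (i : I) (p : ℤ), p < m i → Rel (hg I i p) 0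
  | Hone : ∀ (i : I), Rel (hg I i (m i)) 1

/-- The shifted Yangian `Y_μ`. -/
abbrev Y := RingQuot (Rel I a d m)

/-- The generator `E_i^{(q)}` of `Y_μ`. -/
noncomputable def E (i : I) (q : ℕ+) : Y I a d m :=
  RingQuot.mkAlgHom ℂ (Rel I a d m) (eg I i q)

/-- The generator `F_i^{(q)}` of `Y_μ`. -/
noncomputable def F (i : I) (q : ℕ+) : Y I a d m :=
  RingQuot.mkAlgHom ℂ (Rel I a d m) (fg I i q)

/-- The generator `H_i^{(p)}` of `Y_μ`. -/
noncomputable def H (i : I) (p : ℤ) : Y I a d m :=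
  RingQuot.mkAlgHom ℂ (Rel I a d m) (hg I i p)

end ShiftedYangian

open ShiftedYangian in
/-- The commutation property of the Levendorskii-type elements
`S_i = H_i^{(m_i+2)} − ½ (H_i^{(m_i+1)})²` stated after Definition 3.4 of the paper:
`[S_i, E_j^{(r)}] = (α_i·α_j) E_j^{(r+1)}` and `[S_i, F_j^{(r)}] = −(α_i·α_j) F_j^{(r+1)}`,
where `α_i·α_j = d_i a_{ij}`. -/
theorem levendorskii_raising_operators
    (I : Type) [Fintype I] (a : I → I → ℤ) (d : I → ℤ) (m : I → ℤ)
    (ha2 : ∀ i, a i i = 2) (haneg : ∀ i j, i ≠ j → a i j ≤ 0)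
    (hd : ∀ i, 0 < d i) (hsym : ∀ i j, d i * a i j = d j * a j i)
    (i j : I) (r : ℕ+) :
    brkt (H I a d m i (m i + 2) - (2⁻¹ : ℂ) • (H I a d m i (m i + 1)) ^ 2)
        (E I a d m j r)
      = (d i * a i j) • E I a d m j (r + 1) ∧
    brkt (H I a d m i (m i + 2) - (2⁻¹ : ℂ) • (H I a d m i (m i + 1)) ^ 2)
        (F I a d m j r)
      = -((d i * a i j) • F I a d m j (r + 1)) := by
  classical
  set c : ℂ := ((d i * a i j : ℤ) : ℂ) / 2 with hc
  set HH := H I a d m i with hHH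
  set EE := E I a d m j with hEE
  set FF := F I a d m j with hFF
  have brkt_one : ∀ x : Y I a d m, brkt (1 : Y I a d m) x = 0 := fun x => by
    simp [brkt]
  have brkt_sq : ∀ y z : Y I a d m, brkt (y ^ 2) z = y * brkt y z + brkt y z * y := by
    intro y z; simp only [brkt, sq, mul_sub, sub_mul, mul_assoc]; abel
  have hone : HH (m i) = 1 := by
    have h := RingQuot.mkAlgHom_rel ℂ (Rel.Hone (I := I) (a := a) (d := d) (m := m) i)
    simpa [hHH, H] using h
  have hHE : ∀ (p : ℤ) (q : ℕ+),
      brkt (HH (p + 1)) (EE q) - brkt (HH p) (EE (q + 1))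
        = c • (HH p * EE q + EE q * HH p) := by
    intro p q
    have h := RingQuot.mkAlgHom_rel ℂ (Rel.HE (I := I) (a := a) (d := d) (m := m) i j p q)
    simp only [map_sub, map_mul, map_smul, map_add, brkt] at h ⊢
    simpa [hHH, hEE, H, E, hc] using h
  have hHF : ∀ (p : ℤ) (q : ℕ+),
      brkt (HH (p + 1)) (FF q) - brkt (HH p) (FF (q + 1))
        = -(c • (HH p * FF q + FF q * HH p)) := by
    intro p q
    have h := RingQuot.mkAlgHom_rel ℂ (Rel.HF (I := I) (a := a) (d := d) (m := m) i j p q)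
    simp only [map_sub, map_mul, map_smul, map_add, map_neg, brkt] at h ⊢
    simpa [hHH, hFF, H, F, hc] using h
  have step1E : ∀ q : ℕ+, brkt (HH (m i + 1)) (EE q) = (2 * c) • EE q := by
    intro q
    have h := hHE (m i) q
    rw [hone, brkt_one, sub_zero] at h
    rw [h]; simp only [one_mul, mul_one]; module
  have step1F : ∀ q : ℕ+, brkt (HH (m i + 1)) (FF q) = (-(2 * c)) • FF q := by
    intro q
    have h := hHF (m i) q
    rw [hone, brkt_one, sub_zero] at h
    rw [h]; simp only [one_mul, mul_one]; module
  have e21 : m i + 1 + 1 = m i + 2 := by ring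
  have step2E : brkt (HH (m i + 2)) (EE r)
      = c • (HH (m i + 1) * EE r + EE r * HH (m i + 1)) + (2 * c) • EE (r + 1) := by
    have h := hHE (m i + 1) r
    rw [e21, step1E (r + 1), sub_eq_iff_eq_add] at h
    exact h
  have step2F : brkt (HH (m i + 2)) (FF r)
      = -(c • (HH (m i + 1) * FF r + FF r * HH (m i + 1))) + (-(2 * c)) • FF (r + 1) := by
    have h := hHF (m i + 1) r
    rw [e21, step1F (r + 1), sub_eq_iff_eq_add] at h
    exact h
  have expand : ∀ z : Y I a d m,
      brkt (HH (m i + 2) - (2⁻¹ : ℂ) • HH (m i + 1) ^ 2) z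
        = brkt (HH (m i + 2)) z - (2⁻¹ : ℂ) • brkt (HH (m i + 1) ^ 2) z := by
    intro z
    simp only [brkt, sub_mul, mul_sub, smul_mul_assoc, mul_smul_comm, smul_sub]
    abel
  have h2c : ((d i * a i j : ℤ) : ℂ) = 2 * c := by rw [hc]; ring
  constructor
  · rw [expand, step2E, brkt_sq, step1E, ← Int.cast_smul_eq_zsmul ℂ, h2c]
    simp only [mul_smul_comm, smul_mul_assoc]
    module
  · rw [expand, step2F, brkt_sq, step1F, ← Int.cast_smul_eq_zsmul ℂ, h2c]
    simp only [mul_smul_comm, smul_mul_assoc]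
    module
end

section
/- With notation as in the context, let Y^≥ ⊆ Y_μ be the unital subalgebra generated by all E_i^{(q)} (i∈I, q≥1) and all H_i^{(p)} (i∈I, p∈ℤ), and let Y^≤ be the unital subalgebra generated by all F_i^{(q)} and all H_i^{(p)}. Then for every l ≥ 1, every i₁,…,i_l ∈ I, every q₁,…,q_l ≥ 1, every j ∈ I and every r ≥ 1: the iterated bracket x = [E_{i₁}^{(q₁)}, [E_{i₂}^{(q₂)}, …, [E_{i_{l−1}}^{(q_{l−1})}, E_{i_l}^{(q_l)}]…]] satisfies [x, F_j^{(r)}] ∈ Y^≥; and symmetrically, the iterated bracket y = [F_{i₁}^{(q₁)}, [F_{i₂}^{(q₂)}, …, [F_{i_{l−1}}^{(q_{l−1})}, F_{i_l}^{(q_l)}]…]] satisfies [y, E_j^{(r)}] ∈ Y^≤. -/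
/-! The shifted Yangian `Y_μ`, presented by generators and relations as in the paper:
generators `E_i^{(q)}, F_i^{(q)}` for `i ∈ I`, `q ≥ 1` and `H_i^{(p)}` for `p ∈ ℤ`,
with the relations of Definitions 3.1 and 3.2 of the paper, where `m i = −⟨μ, α_i⟩`. -/

open scoped Classical
namespace ShiftedYangian

section Aux

lemma brkt_zero_right {A : Type*} [Ring A] (x : A) : brkt x 0 = 0 := by simp [brkt]

lemma brkt_one_left {A : Type*} [Ring A] (x : A) : brkt 1 x = 0 := by simp [brkt]

lemma brkt_skew {A : Type*} [Ring A] (x y : A) : brkt x y = - brkt y x := by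
  simp [brkt, neg_sub]

lemma brkt_neg_right {A : Type*} [Ring A] (x y : A) : brkt x (-y) = - brkt x y := by
  simp [brkt, neg_sub]; noncomm_ring

lemma brkt_add_right {A : Type*} [Ring A] (x y z : A) :
    brkt x (y + z) = brkt x y + brkt x z := by
  simp only [brkt]; noncomm_ring

lemma brkt_leibniz {A : Type*} [Ring A] (x y z : A) :
    brkt x (y * z) = brkt x y * z + y * brkt x z := by
  simp only [brkt]; noncomm_ring

lemma brkt_jacobi {A : Type*} [Ring A] (x y z : A) :
    brkt (brkt x y) z = brkt x (brkt y z) - brkt y (brkt x z) := by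
  simp only [brkt]; noncomm_ring

variable (I : Type) (a : I → I → ℤ) (d : I → ℤ) (m : I → ℤ)

lemma map_brkt (x y : FreeAlgebra ℂ (YGen I)) :
    RingQuot.mkAlgHom ℂ (Rel I a d m) (brkt x y)
      = brkt (RingQuot.mkAlgHom ℂ (Rel I a d m) x) (RingQuot.mkAlgHom ℂ (Rel I a d m) y) := by
  simp [brkt, map_sub, map_mul]

lemma qEF (i j : I) (p q : ℕ+) :
    brkt (E I a d m i p) (F I a d m j q)
      = if i = j then H I a d m i ((p : ℤ) + (q : ℤ) - 1) else 0 := by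
  have h := RingQuot.mkAlgHom_rel ℂ (Rel.EF (a := a) (d := d) (m := m) i j p q)
  rw [map_brkt, apply_ite (RingQuot.mkAlgHom ℂ (Rel I a d m)), map_zero] at h
  exact h

lemma qHE (i j : I) (p : ℤ) (q : ℕ+) :
    brkt (H I a d m i (p + 1)) (E I a d m j q)
      = brkt (H I a d m i p) (E I a d m j (q + 1))
        + (((d i * a i j : ℤ) : ℂ) / 2) •
            (H I a d m i p * E I a d m j q + E I a d m j q * H I a d m i p) := by
  have h := RingQuot.mkAlgHom_rel ℂ (Rel.HE (a := a) (d := d) (m := m) i j p q)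
  rw [map_sub, map_brkt, map_brkt, map_smul, map_add, map_mul, map_mul] at h
  exact sub_eq_iff_eq_add'.mp h

lemma qHF (i j : I) (p : ℤ) (q : ℕ+) :
    brkt (H I a d m i (p + 1)) (F I a d m j q)
      = brkt (H I a d m i p) (F I a d m j (q + 1))
        - (((d i * a i j : ℤ) : ℂ) / 2) •
            (H I a d m i p * F I a d m j q + F I a d m j q * H I a d m i p) := by
  have h := RingQuot.mkAlgHom_rel ℂ (Rel.HF (a := a) (d := d) (m := m) i j p q)
  rw [map_sub, map_brkt, map_brkt, map_neg, map_smul, map_add, map_mul, map_mul] at h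
  rw [sub_eq_add_neg]; exact sub_eq_iff_eq_add'.mp h

lemma qHlow (i : I) (p : ℤ) (hp : p < m i) : H I a d m i p = 0 := by
  have h := RingQuot.mkAlgHom_rel ℂ (Rel.Hlow (a := a) (d := d) i p hp)
  rw [map_zero] at h
  exact h

lemma qHone (i : I) : H I a d m i (m i) = 1 := by
  have h := RingQuot.mkAlgHom_rel ℂ (Rel.Hone (a := a) (d := d) (m := m) i)
  rw [map_one] at h
  exact h

/-- The set generating `Y^≥`. -/
def SE : Set (Y I a d m) :=
  (Set.range fun p : I × ℕ+ => E I a d m p.1 p.2) ∪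
    (Set.range fun p : I × ℤ => H I a d m p.1 p.2)

/-- The set generating `Y^≤`. -/
def SF : Set (Y I a d m) :=
  (Set.range fun p : I × ℕ+ => F I a d m p.1 p.2) ∪
    (Set.range fun p : I × ℤ => H I a d m p.1 p.2)

lemma E_mem (i : I) (q : ℕ+) : E I a d m i q ∈ Algebra.adjoin ℂ (SE I a d m) :=
  Algebra.subset_adjoin (Or.inl ⟨(i, q), rfl⟩)

lemma F_mem (i : I) (q : ℕ+) : F I a d m i q ∈ Algebra.adjoin ℂ (SF I a d m) :=
  Algebra.subset_adjoin (Or.inl ⟨(i, q), rfl⟩)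

lemma H_memE (i : I) (p : ℤ) : H I a d m i p ∈ Algebra.adjoin ℂ (SE I a d m) :=
  Algebra.subset_adjoin (Or.inr ⟨(i, p), rfl⟩)

lemma H_memF (i : I) (p : ℤ) : H I a d m i p ∈ Algebra.adjoin ℂ (SF I a d m) :=
  Algebra.subset_adjoin (Or.inr ⟨(i, p), rfl⟩)

lemma brkt_mem {A : Type*} [Ring A] [Algebra ℂ A] {S : Subalgebra ℂ A}
    {x y : A} (hx : x ∈ S) (hy : y ∈ S) : brkt x y ∈ S :=
  sub_mem (mul_mem hx hy) (mul_mem hy hx)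

lemma hbE (i j : I) (p : ℤ) (q : ℕ+) :
    brkt (H I a d m i p) (E I a d m j q) ∈ Algebra.adjoin ℂ (SE I a d m) := by
  rcases lt_or_ge p (m i) with hp | hp
  · rw [qHlow I a d m i p hp, brkt_skew, brkt_zero_right]
    exact neg_mem (zero_mem _)
  · obtain ⟨n, rfl⟩ : ∃ n : ℕ, p = m i + n := ⟨(p - m i).toNat, by omega⟩
    clear hp
    induction n generalizing q with
    | zero =>
      simp only [Nat.cast_zero, add_zero, qHone, brkt_one_left]
      exact zero_mem _
    | succ n ih =>
      have : (m i + (n + 1 : ℕ) : ℤ) = (m i + n) + 1 := by push_cast; ring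
      rw [this, qHE]
      exact add_mem (ih _) (SMulMemClass.smul_mem _ (add_mem
        (mul_mem (H_memE I a d m i _) (E_mem I a d m j q))
        (mul_mem (E_mem I a d m j q) (H_memE I a d m i _))))

lemma hbF (i j : I) (p : ℤ) (q : ℕ+) :
    brkt (H I a d m i p) (F I a d m j q) ∈ Algebra.adjoin ℂ (SF I a d m) := by
  rcases lt_or_ge p (m i) with hp | hp
  · rw [qHlow I a d m i p hp, brkt_skew, brkt_zero_right]
    exact neg_mem (zero_mem _)
  · obtain ⟨n, rfl⟩ : ∃ n : ℕ, p = m i + n := ⟨(p - m i).toNat, by omega⟩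
    clear hp
    induction n generalizing q with
    | zero =>
      simp only [Nat.cast_zero, add_zero, qHone, brkt_one_left]
      exact zero_mem _
    | succ n ih =>
      have : (m i + (n + 1 : ℕ) : ℤ) = (m i + n) + 1 := by push_cast; ring
      rw [this, qHF]
      exact sub_mem (ih _) (SMulMemClass.smul_mem _ (add_mem
        (mul_mem (H_memF I a d m i _) (F_mem I a d m j q))
        (mul_mem (F_mem I a d m j q) (H_memF I a d m i _))))

/-- Bracketing with a generator preserves `Y^≥`. -/
lemma brkt_gen_memE (g : Y I a d m) (hg : g ∈ SE I a d m) (x : Y I a d m)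
    (hx : x ∈ Algebra.adjoin ℂ (SE I a d m)) :
    brkt g x ∈ Algebra.adjoin ℂ (SE I a d m) := by
  induction hx using Algebra.adjoin_induction with
  | mem y hy =>
    rcases hg with ⟨⟨i, q⟩, rfl⟩ | ⟨⟨i, p⟩, rfl⟩
    · rcases hy with ⟨⟨i', q'⟩, rfl⟩ | ⟨⟨i', p'⟩, rfl⟩
      · exact brkt_mem (E_mem I a d m i q) (E_mem I a d m i' q')
      · rw [brkt_skew]
        exact neg_mem (hbE I a d m i' i p' q)
    · rcases hy with ⟨⟨i', q'⟩, rfl⟩ | ⟨⟨i', p'⟩, rfl⟩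
      · exact hbE I a d m i i' p q'
      · exact brkt_mem (H_memE I a d m i p) (H_memE I a d m i' p')
  | algebraMap r =>
    have : brkt g (algebraMap ℂ (Y I a d m) r) = 0 := by
      simp [brkt, Algebra.commutes]
    rw [this]; exact zero_mem _
  | add y z _ _ hy hz => rw [brkt_add_right]; exact add_mem hy hz
  | mul y z hy' hz' hy hz =>
    rw [brkt_leibniz]
    exact add_mem (mul_mem hy hz') (mul_mem hy' hz)

/-- Bracketing with a generator preserves `Y^≤`. -/
lemma brkt_gen_memF (g : Y I a d m) (hg : g ∈ SF I a d m) (x : Y I a d m)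
    (hx : x ∈ Algebra.adjoin ℂ (SF I a d m)) :
    brkt g x ∈ Algebra.adjoin ℂ (SF I a d m) := by
  induction hx using Algebra.adjoin_induction with
  | mem y hy =>
    rcases hg with ⟨⟨i, q⟩, rfl⟩ | ⟨⟨i, p⟩, rfl⟩
    · rcases hy with ⟨⟨i', q'⟩, rfl⟩ | ⟨⟨i', p'⟩, rfl⟩
      · exact brkt_mem (F_mem I a d m i q) (F_mem I a d m i' q')
      · rw [brkt_skew]
        exact neg_mem (hbF I a d m i' i p' q)
    · rcases hy with ⟨⟨i', q'⟩, rfl⟩ | ⟨⟨i', p'⟩, rfl⟩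
      · exact hbF I a d m i i' p q'
      · exact brkt_mem (H_memF I a d m i p) (H_memF I a d m i' p')
  | algebraMap r =>
    have : brkt g (algebraMap ℂ (Y I a d m) r) = 0 := by
      simp [brkt, Algebra.commutes]
    rw [this]; exact zero_mem _
  | add y z _ _ hy hz => rw [brkt_add_right]; exact add_mem hy hz
  | mul y z hy' hz' hy hz =>
    rw [brkt_leibniz]
    exact add_mem (mul_mem hy hz') (mul_mem hy' hz)

lemma nest_memE (last : I × ℕ+) (init : List (I × ℕ+)) :
    nestBrkt (E I a d m last.1 last.2) (init.map fun p => E I a d m p.1 p.2)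
      ∈ Algebra.adjoin ℂ (SE I a d m) := by
  induction init with
  | nil => exact E_mem I a d m last.1 last.2
  | cons p l ih =>
    exact brkt_mem (E_mem I a d m p.1 p.2) ih

lemma nest_memF (last : I × ℕ+) (init : List (I × ℕ+)) :
    nestBrkt (F I a d m last.1 last.2) (init.map fun p => F I a d m p.1 p.2)
      ∈ Algebra.adjoin ℂ (SF I a d m) := by
  induction init with
  | nil => exact F_mem I a d m last.1 last.2
  | cons p l ih =>
    exact brkt_mem (F_mem I a d m p.1 p.2) ih

end Aux

end ShiftedYangian

open ShiftedYangian in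
/-- Lemma 6.10 ('egammafj') of the paper: for any iterated bracket
`x = [E_{i₁}^{(q₁)}, [E_{i₂}^{(q₂)}, …, [E_{i_{l−1}}^{(q_{l−1})}, E_{i_l}^{(q_l)}]…]]` (with
`l ≥ 1`), the commutator `[x, F_j^{(r)}]` lies in the subalgebra `Y^≥` generated by all
`E`'s and `H`'s, and symmetrically with `E`'s and `F`'s exchanged. -/
theorem iterated_bracket_commutator_membership
    (I : Type) [Fintype I] (a : I → I → ℤ) (d : I → ℤ) (m : I → ℤ)
    (ha2 : ∀ i, a i i = 2) (haneg : ∀ i j, i ≠ j → a i j ≤ 0)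
    (hd : ∀ i, 0 < d i) (hsym : ∀ i j, d i * a i j = d j * a j i) :
    ∀ (last : I × ℕ+) (init : List (I × ℕ+)) (j : I) (r : ℕ+),
      (brkt (nestBrkt (E I a d m last.1 last.2) (init.map fun p => E I a d m p.1 p.2))
          (F I a d m j r)
        ∈ Algebra.adjoin ℂ
            ((Set.range fun p : I × ℕ+ => E I a d m p.1 p.2) ∪
              (Set.range fun p : I × ℤ => H I a d m p.1 p.2))) ∧
      (brkt (nestBrkt (F I a d m last.1 last.2) (init.map fun p => F I a d m p.1 p.2))
          (E I a d m j r)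
        ∈ Algebra.adjoin ℂ
            ((Set.range fun p : I × ℕ+ => F I a d m p.1 p.2) ∪
              (Set.range fun p : I × ℤ => H I a d m p.1 p.2))) := by
  intro last init j r
  show _ ∈ Algebra.adjoin ℂ (SE I a d m) ∧ _ ∈ Algebra.adjoin ℂ (SF I a d m)
  induction init with
  | nil =>
    constructor
    · simp only [List.map_nil, nestBrkt]
      rw [qEF]
      split
      · exact H_memE I a d m last.1 _
      · exact zero_mem _
    · simp only [List.map_nil, nestBrkt]
      rw [brkt_skew, qEF]
      split
      · exact neg_mem (H_memF I a d m j _)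
      · exact neg_mem (zero_mem _)
  | cons p l ih =>
    constructor
    · simp only [List.map_cons, nestBrkt]
      rw [brkt_jacobi]
      refine sub_mem (brkt_gen_memE I a d m _ (Or.inl ⟨p, rfl⟩) _ ih.1) ?_
      rw [qEF]
      split
      · rw [brkt_skew]
        exact neg_mem (brkt_gen_memE I a d m _ (Or.inr ⟨(p.1, _), rfl⟩) _
          (nest_memE I a d m last l))
      · rw [brkt_zero_right]; exact zero_mem _
    · simp only [List.map_cons, nestBrkt]
      rw [brkt_jacobi]
      refine sub_mem (brkt_gen_memF I a d m _ (Or.inl ⟨p, rfl⟩) _ ih.2) ?_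
      rw [brkt_skew (F I a d m p.1 p.2), qEF, brkt_neg_right]
      refine neg_mem ?_
      split
      · rw [brkt_skew]
        exact neg_mem (brkt_gen_memF I a d m _ (Or.inr ⟨(j, _), rfl⟩) _
          (nest_memF I a d m last l))
      · rw [brkt_zero_right]; exact zero_mem _
end

section
/- Let σ be a type, let w : σ → ℕ be a weight function, and consider the polynomial ring MvPolynomial σ ℂ with its w-weighted grading (the variable X_s is homogeneous of degree w(s)). Let J be an ideal of MvPolynomial σ ℂ which is homogeneous for this grading, and let B := MvPolynomial σ ℂ / J. For d ∈ ℕ let I_d ⊆ B be the ideal generated by the images of the variables X_s with w(s) > d. Then ⋂_{d∈ℕ} I_d = 0. -/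
/-- Lemma 2.3 of the paper, in the concrete form in which it is proved: let `B` be the quotient
of a polynomial ring `MvPolynomial σ ℂ` by an ideal `J` that is homogeneous for the `w`-weighted
grading, and for each `d` let `I d` be the ideal of `B` generated by the images of the variables
`X s` with `w s > d`.  Then `⋂_d I_d = 0`. -/
theorem inf_truncation_ideals_eq_bot
    {σ : Type*} (w : σ → ℕ) (J : Ideal (MvPolynomial σ ℂ))
    (hJ : ∀ p ∈ J, ∀ n : ℕ, MvPolynomial.weightedHomogeneousComponent w n p ∈ J) :
    (⨅ d : ℕ, Ideal.span
        ((fun s => Ideal.Quotient.mk J (MvPolynomial.X s)) '' {s : σ | d < w s})) = ⊥ := by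
  rw [eq_bot_iff]
  intro b hb
  obtain ⟨p, rfl⟩ := Ideal.Quotient.mk_surjective b
  simp only [Ideal.mem_iInf] at hb
  set D := p.weightedTotalDegree w with hD
  -- at level D
  have hbD := hb D
  have himg : (fun s => Ideal.Quotient.mk J (MvPolynomial.X s)) '' {s : σ | D < w s}
      = Ideal.Quotient.mk J '' (MvPolynomial.X '' {s : σ | D < w s}) := by
    rw [Set.image_image]
  rw [himg, ← Ideal.map_span] at hbD
  rw [Ideal.mem_map_iff_of_surjective _ Ideal.Quotient.mk_surjective] at hbD
  obtain ⟨x, hx, hxp⟩ := hbD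
  -- p - x ∈ J
  have hpx : p - x ∈ J := by
    have := Ideal.Quotient.eq.mp hxp
    simpa using J.neg_mem this
  -- components of x of degree ≤ D vanish
  have hxcomp : ∀ n ≤ D, MvPolynomial.weightedHomogeneousComponent w n x = 0 := by
    intro n hn
    apply MvPolynomial.weightedHomogeneousComponent_eq_zero'
    intro m hm
    rw [MvPolynomial.mem_ideal_span_X_image] at hx
    obtain ⟨i, hi, hmi⟩ := hx m hm
    intro hmn
    have h1 : w i ≤ Finsupp.weight w m := Finsupp.le_weight_of_ne_zero' w hmi
    have h2 : D < w i := hi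
    omega
  -- each component of p lies in J
  have hpcomp : ∀ n, MvPolynomial.weightedHomogeneousComponent w n p ∈ J := by
    intro n
    rcases le_or_gt n D with hn | hn
    · have : MvPolynomial.weightedHomogeneousComponent w n p
          = MvPolynomial.weightedHomogeneousComponent w n (p - x) := by
        rw [map_sub, hxcomp n hn, sub_zero]
      rw [this]
      exact hJ _ hpx n
    · have : MvPolynomial.weightedHomogeneousComponent w n p = 0 := by
        apply MvPolynomial.weightedHomogeneousComponent_eq_zero'
        intro m hm
        have := MvPolynomial.le_weightedTotalDegree w hm
        omega
      rw [this]; exact J.zero_mem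
  have hpJ : p ∈ J := by
    have hsum := MvPolynomial.sum_weightedHomogeneousComponent w p
    rw [finsum_eq_sum _ (MvPolynomial.weightedHomogeneousComponent_finsupp p)] at hsum
    rw [← hsum]
    exact Ideal.sum_mem _ fun n _ => hpcomp n
  rw [Ideal.mem_bot]
  exact Ideal.Quotient.eq_zero_iff_mem.mpr hpJ
end
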